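/- Let σ^j be the j-th power of the linear map σ on F_2^{n-1} (basis x_1,...,x_{n-1}) given by σ(x_i) = x_{i+1} for i < n-1 and σ(x_{n-1}) = x_1 + ... + x_{n-1}. Then for 1 ≤ j ≤ n-1, σ^j(x_{n-j}) = x_1 + x_2 + ... + x_{n-1}, and consequently σ^j is not a permutation matrix of the basis x_1,...,x_{n-1}. -/
import Mathlib


/-- The linear map `σ` on `F_2^d` (basis `x_1, …, x_d`) with `σ(x_i) = x_{i+1}`
for `i < d` and `σ(x_d) = x_1 + ⋯ + x_d`, in coordinates; and the associated
linear automorphism `sigEquiv`. -/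
def sigMap (d : ℕ) : (Fin d → ZMod 2) →ₗ[ZMod 2] (Fin d → ZMod 2) where
  toFun v := fun j =>
    (if (j : ℕ) = 0 then 0 else v ⟨(j : ℕ) - 1, lt_of_le_of_lt (Nat.sub_le _ _) j.isLt⟩) +
      v ⟨d - 1, Nat.sub_lt j.pos Nat.one_pos⟩
  map_add' u v := by
    funext j
    by_cases h : (j : ℕ) = 0 <;> simp [h, Pi.add_apply] <;> ring
  map_smul' c v := by
    funext j
    by_cases h : (j : ℕ) = 0 <;> simp [h, Pi.smul_apply] <;> ring

noncomputable def sigEquiv (d : ℕ) : (Fin d → ZMod 2) ≃ₗ[ZMod 2] (Fin d → ZMod 2) :=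
  LinearEquiv.ofBijective (sigMap d) (by
    have hinj : Function.Injective (sigMap d) := by
      rw [← LinearMap.ker_eq_bot, LinearMap.ker_eq_bot']
      intro v hv
      funext i
      have hl : v ⟨d - 1, Nat.sub_lt i.pos Nat.one_pos⟩ = 0 := by
        have := congrFun hv ⟨0, i.pos⟩
        simpa [sigMap] using this
      rcases eq_or_ne (i : ℕ) (d - 1) with h | h
      · have hi : i = ⟨d - 1, Nat.sub_lt i.pos Nat.one_pos⟩ := Fin.ext (by simpa using h)
        rw [hi, hl]; rfl
      · have hi1 : (i : ℕ) + 1 < d := by omega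
        have h2 := congrFun hv ⟨(i : ℕ) + 1, hi1⟩
        have h3 : (⟨(i : ℕ) + 1 - 1, lt_of_le_of_lt (Nat.sub_le _ _) hi1⟩ : Fin d) = i :=
          Fin.ext (by simp)
        simp [sigMap, hl, h3] at h2
        simpa using h2
    exact ⟨hinj, Finite.surjective_of_injective hinj⟩)


lemma sig_single (d : ℕ) (i : Fin d) (hi : (i : ℕ) < d - 1) :
    sigMap d (Pi.single i 1) = Pi.single (⟨(i : ℕ) + 1, by omega⟩ : Fin d) 1 := by
  funext k
  simp only [sigMap, LinearMap.coe_mk, AddHom.coe_mk, Pi.single_apply]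
  by_cases h : (k : ℕ) = 0
  · have h1 : ¬ ((k : Fin d) = ⟨(i:ℕ)+1, by omega⟩) := by
      simp [Fin.ext_iff, h]
    have h2 : ¬ ((⟨d-1, Nat.sub_lt k.pos Nat.one_pos⟩ : Fin d) = i) := by
      simp [Fin.ext_iff]; omega
    simp [h, h1, h2]
  · have h2 : ¬ ((⟨d-1, Nat.sub_lt k.pos Nat.one_pos⟩ : Fin d) = i) := by
      simp [Fin.ext_iff]; omega
    simp only [h, if_neg, if_false, h2, add_zero]
    by_cases h3 : (k : ℕ) = (i : ℕ) + 1
    · have ha : (⟨(k:ℕ)-1, lt_of_le_of_lt (Nat.sub_le _ _) k.isLt⟩ : Fin d) = i :=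
        Fin.ext (by simp; omega)
      have h4 : (k : Fin d) = ⟨(i:ℕ)+1, by omega⟩ := Fin.ext h3
      simp [ha, h4]
    · have h5 : ¬ ((⟨(k:ℕ)-1, lt_of_le_of_lt (Nat.sub_le _ _) k.isLt⟩ : Fin d) = i) := by
        simp [Fin.ext_iff]; omega
      have h6 : ¬ ((k : Fin d) = ⟨(i:ℕ)+1, by omega⟩) := by
        simp [Fin.ext_iff]; omega
      simp [h5, h6]

lemma sig_last (d : ℕ) (hd : 1 ≤ d) :
    sigMap d (Pi.single (⟨d-1, by omega⟩ : Fin d) 1) = fun _ => 1 := by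
  funext k
  simp only [sigMap, LinearMap.coe_mk, AddHom.coe_mk, Pi.single_apply]
  by_cases h : (k : ℕ) = 0
  · simp [h]
  · have h5 : ¬ ((⟨(k:ℕ)-1, lt_of_le_of_lt (Nat.sub_le _ _) k.isLt⟩ : Fin d) = (⟨d-1, by omega⟩ : Fin d)) := by
      simp [Fin.ext_iff]; omega
    simp [h, h5]

lemma sig_pow (d : ℕ) (hd : 1 ≤ d) : ∀ j (_ : 1 ≤ j) (_ : j ≤ d),
    (((sigMap d : Module.End (ZMod 2) (Fin d → ZMod 2)) ^ j)
      (Pi.single (⟨d - j, by omega⟩ : Fin d) 1)) = fun _ => 1 := by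
  intro j
  induction j with
  | zero => exact fun h => absurd h (by omega)
  | succ j ih =>
    intro _ h2
    rcases Nat.eq_zero_or_pos j with hj | hj
    · subst hj; simpa [pow_one] using sig_last d hd
    · rw [pow_succ, Module.End.mul_apply]
      have hlt : (d - (j+1) : ℕ) < d - 1 := by omega
      rw [sig_single d ⟨d - (j+1), by omega⟩ hlt]
      have he : (⟨d - (j+1) + 1, by omega⟩ : Fin d) = ⟨d - j, by omega⟩ :=
        Fin.ext (by simp; omega)
      rw [he]
      exact ih hj (by omega)

/-- For `n ≥ 3` and `1 ≤ j ≤ n-1`, the `j`-th power of `σ` on `F_2^{n-1}`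
sends the basis vector `x_{n-j}` to `x_1 + x_2 + ⋯ + x_{n-1}` (the all-ones
vector); consequently `σ^j` is not a permutation matrix of the basis. -/
theorem stmt18 (n : ℕ) (hn : 3 ≤ n) (j : ℕ) (hj1 : 1 ≤ j) (hj2 : j ≤ n - 1) :
    (((sigMap (n - 1) : Module.End (ZMod 2) (Fin (n - 1) → ZMod 2)) ^ j)
        (Pi.single (⟨n - 1 - j, by omega⟩ : Fin (n - 1)) 1) = fun _ => 1) ∧
    ¬∃ τ : Equiv.Perm (Fin (n - 1)), ∀ i : Fin (n - 1),
      (((sigMap (n - 1) : Module.End (ZMod 2) (Fin (n - 1) → ZMod 2)) ^ j)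
          (Pi.single i 1)) = Pi.single (τ i) 1 := by
  have h1 := sig_pow (n - 1) (by omega) j hj1 hj2
  refine ⟨h1, ?_⟩
  rintro ⟨τ, hτ⟩
  have h2 := hτ ⟨n - 1 - j, by omega⟩
  rw [h1] at h2
  have e0 := congrFun h2 ⟨0, by omega⟩
  have e1 := congrFun h2 ⟨1, by omega⟩
  simp only [Pi.single_apply] at e0 e1
  by_cases c0 : (⟨0, by omega⟩ : Fin (n-1)) = τ ⟨n - 1 - j, by omega⟩
  · rw [if_pos c0] at e0
    have c1 : ¬ ((⟨1, by omega⟩ : Fin (n-1)) = τ ⟨n - 1 - j, by omega⟩) := by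
      rw [← c0]; simp [Fin.ext_iff]
    rw [if_neg c1] at e1
    exact one_ne_zero e1
  · rw [if_neg c0] at e0
    exact one_ne_zero e0
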